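/- Let ψ : [0,∞) → (0,∞) be Lipschitz with constant L and bounded by 1, let μ be a probability measure on ℝ^d supported in B(0,R), and let T, S : ℝ^d → ℝ^d be maps. Then for x ∈ B(0,R): |∫ ψ(|x−y|)(y−x) dμ(y) − ∫ ψ(|T(x) − S(y)|)(S(y) − T(x)) dμ(y)| ≤ (1 + 2RL)(|x − T(x)| + ∫ |y − S(y)| dμ(y)), provided |T(x)| ≤ R and |S(y)| ≤ R on supp μ. -/

import Mathlib

open MeasureTheory in
theorem stability_core_estimate {d : ℕ}
    (ψ : ℝ → ℝ) (L : NNReal) (hL : LipschitzOnWith L ψ (Set.Ici 0))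
    (hψ01 : ∀ r, 0 ≤ r → 0 ≤ ψ r ∧ ψ r ≤ 1)
    (R : ℝ) (hR : 0 ≤ R)
    (μ : Measure (EuclideanSpace ℝ (Fin d))) [IsProbabilityMeasure μ]
    (hsupp : μ (Metric.closedBall (0 : EuclideanSpace ℝ (Fin d)) R)ᶜ = 0)
    (T S : EuclideanSpace ℝ (Fin d) → EuclideanSpace ℝ (Fin d))
    (hS : Measurable S)
    (x : EuclideanSpace ℝ (Fin d)) (hx : ‖x‖ ≤ R) (hTx : ‖T x‖ ≤ R)
    (hSy : ∀ᵐ y ∂μ, ‖S y‖ ≤ R) :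
    ‖(∫ y, ψ ‖x - y‖ • (y - x) ∂μ) -
        ∫ y, ψ ‖T x - S y‖ • (S y - T x) ∂μ‖ ≤
      (1 + 2 * R * L) * (‖x - T x‖ + ∫ y, ‖y - S y‖ ∂μ) := by
  set φ : ℝ → ℝ := fun r => ψ (max r 0) with hφdef
  have hLφ : LipschitzWith L φ := by
    rw [← lipschitzOnWith_univ]
    have := hL.comp ((LipschitzWith.id.max_const 0).lipschitzOnWith (s := Set.univ))
      (fun r _ => le_max_right r 0)
    rw [mul_one] at this; exact this
  have hφ01 : ∀ r, 0 ≤ φ r ∧ φ r ≤ 1 := fun r => hψ01 _ (le_max_right r 0)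
  have hφ : ∀ a : EuclideanSpace ℝ (Fin d), ψ ‖a‖ = φ ‖a‖ := fun a => by
    simp [hφdef, max_eq_left (norm_nonneg a)]
  have hc : (0:ℝ) ≤ 1 + 2 * R * L := by positivity
  -- key pointwise estimate
  have key : ∀ a b : EuclideanSpace ℝ (Fin d), ‖b‖ ≤ 2 * R →
      ‖φ ‖a‖ • a - φ ‖b‖ • b‖ ≤ (1 + 2 * R * L) * ‖a - b‖ := by
    intro a b hb
    have h1 : φ ‖a‖ • a - φ ‖b‖ • b = φ ‖a‖ • (a - b) + (φ ‖a‖ - φ ‖b‖) • b := by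
      rw [smul_sub, sub_smul]; abel
    have hdist : |φ ‖a‖ - φ ‖b‖| ≤ (L:ℝ) * |‖a‖ - ‖b‖| := by
      have := hLφ.dist_le_mul ‖a‖ ‖b‖
      simpa [Real.dist_eq] using this
    have habs : |‖a‖ - ‖b‖| ≤ ‖a - b‖ := abs_norm_sub_norm_le a b
    calc ‖φ ‖a‖ • a - φ ‖b‖ • b‖
        ≤ ‖φ ‖a‖ • (a - b)‖ + ‖(φ ‖a‖ - φ ‖b‖) • b‖ := by rw [h1]; exact norm_add_le _ _
      _ = |φ ‖a‖| * ‖a - b‖ + |φ ‖a‖ - φ ‖b‖| * ‖b‖ := by rw [norm_smul, norm_smul]; simp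
      _ ≤ 1 * ‖a - b‖ + ((L:ℝ) * ‖a - b‖) * (2 * R) := by
          gcongr
          · exact abs_le.2 ⟨by linarith [(hφ01 ‖a‖).1], (hφ01 ‖a‖).2⟩
          · calc |φ ‖a‖ - φ ‖b‖| ≤ (L:ℝ) * |‖a‖ - ‖b‖| := hdist
              _ ≤ (L:ℝ) * ‖a - b‖ := by gcongr
      _ = (1 + 2 * R * L) * ‖a - b‖ := by ring
  have hμR : ∀ᵐ y ∂μ, ‖y‖ ≤ R := by
    refine (ae_iff.2 ?_)
    have : {y : EuclideanSpace ℝ (Fin d) | ¬ ‖y‖ ≤ R} ⊆ (Metric.closedBall (0 : EuclideanSpace ℝ (Fin d)) R)ᶜ := by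
      intro y hy hy'
      exact hy (mem_closedBall_zero_iff.1 hy')
    exact measure_mono_null this hsupp
  simp only [hφ]
  set f : EuclideanSpace ℝ (Fin d) → EuclideanSpace ℝ (Fin d) := fun y => φ ‖x - y‖ • (y - x) with hfdef
  set g : EuclideanSpace ℝ (Fin d) → EuclideanSpace ℝ (Fin d) := fun y => φ ‖T x - S y‖ • (S y - T x) with hgdef
  have hf_meas : AEStronglyMeasurable f μ := by
    refine Measurable.aestronglyMeasurable ?_
    exact ((hLφ.continuous.measurable.comp ((measurable_const.sub measurable_id).norm)).smul
      (measurable_id.sub measurable_const))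
  have hg_meas : AEStronglyMeasurable g μ := by
    refine Measurable.aestronglyMeasurable ?_
    exact ((hLφ.continuous.measurable.comp ((measurable_const.sub hS).norm)).smul
      (hS.sub measurable_const))
  have hbound : ∀ (a b : EuclideanSpace ℝ (Fin d)), ‖φ ‖a - b‖ • (b - a)‖ ≤ ‖b - a‖ := by
    intro a b
    rw [norm_smul]
    have := hφ01 ‖a - b‖
    calc ‖φ ‖a - b‖‖ * ‖b - a‖ ≤ 1 * ‖b - a‖ := by
          gcongr
          exact abs_le.2 ⟨by linarith [this.1], this.2⟩
      _ = ‖b - a‖ := one_mul _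
  have hf : Integrable f μ := by
    refine (integrable_const (2 * R)).mono' hf_meas ?_
    filter_upwards [hμR] with y hy
    calc ‖f y‖ ≤ ‖y - x‖ := hbound x y
      _ ≤ ‖y‖ + ‖x‖ := norm_sub_le _ _
      _ ≤ 2 * R := by linarith
  have hg : Integrable g μ := by
    refine (integrable_const (2 * R)).mono' hg_meas ?_
    filter_upwards [hSy] with y hy
    calc ‖g y‖ ≤ ‖S y - T x‖ := hbound (T x) (S y)
      _ ≤ ‖S y‖ + ‖T x‖ := norm_sub_le _ _
      _ ≤ 2 * R := by linarith
  have hnorm : Integrable (fun y => ‖y - S y‖) μ := by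
    refine (integrable_const (2 * R)).mono'
      ((measurable_id.sub hS).norm.aestronglyMeasurable) ?_
    filter_upwards [hμR, hSy] with y hy hy'
    calc ‖‖y - S y‖‖ = ‖y - S y‖ := norm_norm _
      _ ≤ ‖y‖ + ‖S y‖ := norm_sub_le _ _
      _ ≤ 2 * R := by linarith
  calc ‖(∫ y, f y ∂μ) - ∫ y, g y ∂μ‖ = ‖∫ y, (f y - g y) ∂μ‖ := by
        rw [integral_sub hf hg]
    _ ≤ ∫ y, ‖f y - g y‖ ∂μ := norm_integral_le_integral_norm _
    _ ≤ ∫ y, (1 + 2 * R * L) * (‖x - T x‖ + ‖y - S y‖) ∂μ := by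
        refine integral_mono_ae (hf.sub hg).norm
          (((integrable_const ‖x - T x‖).add hnorm).const_mul _) ?_
        filter_upwards [hμR, hSy] with y hy hy'
        have hb2R : ‖S y - T x‖ ≤ 2 * R := by
          calc ‖S y - T x‖ ≤ ‖S y‖ + ‖T x‖ := norm_sub_le _ _
            _ ≤ 2 * R := by linarith
        have h1 : ‖f y - g y‖ ≤ (1 + 2 * R * L) * ‖(y - x) - (S y - T x)‖ := by
          have := key (y - x) (S y - T x) hb2R
          simpa [hfdef, hgdef, norm_sub_rev x y, norm_sub_rev (T x) (S y)] using this
        have h2 : ‖(y - x) - (S y - T x)‖ ≤ ‖x - T x‖ + ‖y - S y‖ := by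
          have : (y - x) - (S y - T x) = (y - S y) - (x - T x) := by abel
          rw [this]
          calc ‖(y - S y) - (x - T x)‖ ≤ ‖y - S y‖ + ‖x - T x‖ := norm_sub_le _ _
            _ = ‖x - T x‖ + ‖y - S y‖ := by ring
        calc ‖f y - g y‖ ≤ (1 + 2 * R * L) * ‖(y - x) - (S y - T x)‖ := h1
          _ ≤ (1 + 2 * R * L) * (‖x - T x‖ + ‖y - S y‖) := by gcongr
    _ = (1 + 2 * R * L) * (‖x - T x‖ + ∫ y, ‖y - S y‖ ∂μ) := by
        rw [integral_const_mul, integral_add (integrable_const _) hnorm, integral_const]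
        simp
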